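/- Let k ≥ 1 and let A be a commutative local ℂ-algebra with maximal ideal m, finite-dimensional over ℂ with dim_ℂ A = k and residue field A/m ≅ ℂ. Then A is isomorphic as a ℂ-algebra to ℂ[z]/(z^k) if and only if m^{k−1} ≠ 0. -/

import Mathlib

open Polynomial

/-- Let `A` be a commutative local `ℂ`-algebra with maximal ideal `m`,
finite-dimensional over `ℂ` of dimension `k` and with residue field `ℂ`. Then `A` is
isomorphic as a `ℂ`-algebra to the truncated polynomial algebra `ℂ[z]/(z^k)` if and only if
`m^{k-1} ≠ 0`. -/
theorem curvilinear_algebra_iff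
    (k : ℕ) (hk : 1 ≤ k)
    (A : Type) [CommRing A] [IsLocalRing A] [Algebra ℂ A]
    [FiniteDimensional ℂ A] (hdim : Module.finrank ℂ A = k)
    (hres : Nonempty (IsLocalRing.ResidueField A ≃ₐ[ℂ] ℂ)) :
    Nonempty (A ≃ₐ[ℂ] (Polynomial ℂ ⧸ Ideal.span {(Polynomial.X : Polynomial ℂ) ^ k}))
      ↔ (IsLocalRing.maximalIdeal A) ^ (k - 1) ≠ ⊥ := by
  set m : Ideal A := IsLocalRing.maximalIdeal A with hm
  constructor
  · rintro ⟨e⟩ h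
    set y : A := e.symm (Ideal.Quotient.mk _ (X : ℂ[X])) with hy
    have hyk : y ^ k = 0 := by
      have h0 : (Ideal.Quotient.mk (Ideal.span {(X : ℂ[X]) ^ k})) ((X : ℂ[X]) ^ k) = 0 :=
        Ideal.Quotient.eq_zero_iff_mem.mpr (Ideal.subset_span rfl)
      rw [hy, ← map_pow, ← map_pow, h0, map_zero]
    have hymem : y ∈ m := by
      rw [hm, IsLocalRing.mem_maximalIdeal, mem_nonunits_iff]
      intro hu
      exact not_isUnit_zero (hyk ▸ hu.pow k)
    have hy1 : y ^ (k - 1) = 0 := by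
      have := Ideal.pow_mem_pow hymem (k - 1)
      rw [h] at this
      exact this
    have : (Ideal.Quotient.mk (Ideal.span {(X : ℂ[X]) ^ k}) X) ^ (k - 1) = 0 := by
      have := congrArg e hy1
      rwa [hy, ← map_pow, e.apply_symm_apply, map_zero] at this
    rw [← map_pow, Ideal.Quotient.eq_zero_iff_mem, Ideal.mem_span_singleton] at this
    have hne : (X : ℂ[X]) ^ (k - 1) ≠ 0 := pow_ne_zero _ X_ne_zero
    have := Polynomial.natDegree_le_of_dvd this hne
    simp only [natDegree_pow, natDegree_X, mul_one] at this
    omega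
  · intro hne
    have hArt : IsArtinianRing A := isArtinian_of_tower ℂ inferInstance
    have hNoe : IsNoetherianRing A := isNoetherian_of_tower ℂ inferInstance
    obtain ⟨n, hn⟩ : IsNilpotent m := by
      rw [hm, ← IsLocalRing.jacobson_eq_maximalIdeal ⊥ bot_ne_top]
      exact IsArtinianRing.isNilpotent_jacobson_bot
    -- the chain of powers of m is strictly decreasing down to step k
    have hstrict : ∀ i < k, m ^ (i + 1) < m ^ i := by
      intro i hik
      refine lt_of_le_of_ne (Ideal.pow_le_pow_right (by omega : i ≤ i + 1)) (fun heq => ?_)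
      have hconst : ∀ j, m ^ (i + j) = m ^ i := by
        intro j
        induction j with
        | zero => rfl
        | succ j ih => rw [← Nat.add_assoc, pow_succ, ih, ← pow_succ, heq]
      have h1 : m ^ i = ⊥ := by
        have h2 : m ^ (i + n) ≤ m ^ n := Ideal.pow_le_pow_right (Nat.le_add_left n i)
        rw [hconst n, hn] at h2
        exact le_bot_iff.mp h2
      exact hne (le_bot_iff.mp (h1 ▸ Ideal.pow_le_pow_right (by omega)))
    have hrs_le : ∀ {p q : Ideal A}, p ≤ q →
        Submodule.restrictScalars ℂ p ≤ Submodule.restrictScalars ℂ q := fun h x hx => h hx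
    have hrs_lt : ∀ {p q : Ideal A}, p < q →
        Submodule.restrictScalars ℂ p < Submodule.restrictScalars ℂ q := by
      intro p q hpq
      rw [lt_iff_le_and_ne] at hpq ⊢
      exact ⟨hrs_le hpq.1, fun hc => hpq.2 (Submodule.restrictScalars_injective ℂ _ _ hc)⟩
    set f : ℕ → ℕ := fun i => Module.finrank ℂ (Submodule.restrictScalars ℂ (m ^ i)) with hf
    have hf0 : f 0 = k := by
      have h0 : (m ^ 0 : Ideal A) = ⊤ := by rw [pow_zero, Ideal.one_eq_top]
      show Module.finrank ℂ (Submodule.restrictScalars ℂ (m ^ 0)) = k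
      rw [h0, Submodule.restrictScalars_top, finrank_top, hdim]
    have hfdec : ∀ i < k, f (i + 1) < f i :=
      fun i hik => Submodule.finrank_lt_finrank_of_lt (hrs_lt (hstrict i hik))
    have hfle : ∀ i ≤ k, f i ≤ k - i := by
      intro i hik
      induction i with
      | zero => omega
      | succ i ih =>
        have h1 := hfdec i (by omega)
        have h2 := ih (by omega)
        omega
    have hfge : ∀ j ≤ k, j ≤ f (k - j) := by
      intro j
      induction j with
      | zero => omega
      | succ j ih =>
        intro hjk
        have h1 : k - (j + 1) + 1 = k - j := by omega
        have h2 := hfdec (k - (j + 1)) (by omega)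
        rw [h1] at h2
        have := ih (by omega)
        omega
    have heq : ∀ i ≤ k, f i = k - i := by
      intro i hik
      have h1 := hfle i hik
      have h2 := hfge (k - i) (by omega)
      rw [show k - (k - i) = i by omega] at h2
      omega
    have hrank : ∀ i ≤ k, Module.finrank ℂ (Submodule.restrictScalars ℂ (m ^ i)) = k - i :=
      heq
    have hbot_of_rank : ∀ i, Module.finrank ℂ (Submodule.restrictScalars ℂ (m ^ i)) = 0 →
        m ^ i = ⊥ := by
      intro i h0
      have hb : Submodule.restrictScalars ℂ (m ^ i) = ⊥ := Submodule.finrank_eq_zero.mp h0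
      exact Submodule.restrictScalars_injective ℂ _ _ (by rw [hb, Submodule.restrictScalars_bot])
    have hmk : m ^ k = ⊥ := hbot_of_rank k (by rw [hrank k le_rfl]; omega)
    -- find a generator of m
    obtain ⟨x, hxm, hxspan⟩ : ∃ x, x ∈ m ∧ m = Ideal.span {x} := by
      rcases eq_or_lt_of_le hk with h1 | h2
      · -- k = 1
        have hb : m = ⊥ := by
          have := hbot_of_rank 1 (by rw [hrank 1 hk]; omega)
          rwa [pow_one] at this
        exact ⟨0, by simp [hb], by rw [hb]; exact (Ideal.span_singleton_eq_bot.mpr rfl).symm⟩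
      · -- k ≥ 2
        have hlt : Submodule.restrictScalars ℂ (m ^ 2) < Submodule.restrictScalars ℂ (m ^ 1) :=
          hrs_lt (hstrict 1 h2)
        obtain ⟨x, hx1, hx2⟩ := SetLike.exists_of_lt hlt
        have hxm : x ∈ m := by
          have : x ∈ (m ^ 1 : Ideal A) := hx1
          rwa [pow_one] at this
        have hsup : Submodule.span ℂ {x} ⊔ Submodule.restrictScalars ℂ (m ^ 2)
            = Submodule.restrictScalars ℂ (m ^ 1) := by
          apply Submodule.eq_of_le_of_finrank_le
          · exact sup_le (by rwa [Submodule.span_le, Set.singleton_subset_iff]) hlt.le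
          · have hlt2 : Submodule.restrictScalars ℂ (m ^ 2)
                < Submodule.span ℂ {x} ⊔ Submodule.restrictScalars ℂ (m ^ 2) :=
              lt_of_le_of_ne le_sup_right (fun hc =>
                hx2 (hc ▸ Submodule.mem_sup_left (Submodule.mem_span_singleton_self x)))
            have h3 := Submodule.finrank_lt_finrank_of_lt hlt2
            have e2 := hrank 2 (by omega)
            have e1 := hrank 1 (by omega)
            omega
        have hle : (m : Submodule A A) ≤ (Ideal.span {x} : Ideal A) ⊔ m • (m : Submodule A A) := by
          intro y hy
          have hy1 : y ∈ Submodule.span ℂ {x} ⊔ Submodule.restrictScalars ℂ (m ^ 2) := by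
            rw [hsup]
            show y ∈ (m ^ 1 : Ideal A)
            rwa [pow_one]
          obtain ⟨a, ha, b, hb, rfl⟩ := Submodule.mem_sup.mp hy1
          refine Submodule.add_mem _ (Submodule.mem_sup_left ?_) (Submodule.mem_sup_right ?_)
          · obtain ⟨c, rfl⟩ := Submodule.mem_span_singleton.mp ha
            rw [Algebra.smul_def]
            exact Ideal.mul_mem_left _ _ (Ideal.subset_span rfl)
          · have hb2 : b ∈ (m ^ 2 : Ideal A) := hb
            rwa [pow_two, ← Ideal.smul_eq_mul] at hb2
        have hNak := Submodule.le_of_le_smul_of_le_jacobson_bot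
          (IsNoetherian.noetherian (m : Submodule A A))
          (le_of_eq (IsLocalRing.jacobson_eq_maximalIdeal ⊥ bot_ne_top).symm) hle
        exact ⟨x, hxm, le_antisymm hNak
          ((Ideal.span_le).mpr (Set.singleton_subset_iff.mpr hxm))⟩
    have hpow : ∀ i, m ^ i = Ideal.span {x ^ i} := by
      intro i
      induction i with
      | zero => simp [Ideal.one_eq_top, Ideal.span_singleton_one]
      | succ i ih =>
        rw [pow_succ, ih, hxspan, Ideal.span_singleton_mul_span_singleton, ← pow_succ]
    have hxk : x ^ k = 0 := by
      have := hmk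
      rw [hpow k] at this
      exact Ideal.span_singleton_eq_bot.mp this
    have hxnot : ∀ i < k, x ^ i ∉ m ^ (i + 1) := by
      intro i hik hmem
      exact (hstrict i hik).not_ge
        (by rw [hpow i]; exact (Ideal.span_le).mpr (Set.singleton_subset_iff.mpr hmem))
    set S : Submodule ℂ A := Submodule.span ℂ (Set.range fun j : Fin k => x ^ (j : ℕ)) with hS
    have hstep : ∀ i < k, Submodule.restrictScalars ℂ (m ^ i)
        ≤ Submodule.span ℂ {x ^ i} ⊔ Submodule.restrictScalars ℂ (m ^ (i + 1)) := by
      intro i hik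
      have hxi : x ^ i ∈ Submodule.restrictScalars ℂ (m ^ i) := by
        show x ^ i ∈ m ^ i
        rw [hpow i]
        exact Ideal.subset_span rfl
      refine le_of_eq (Submodule.eq_of_le_of_finrank_le
        (sup_le (by rwa [Submodule.span_le, Set.singleton_subset_iff])
          (hrs_le (Ideal.pow_le_pow_right (by omega : i ≤ i + 1)))) ?_).symm
      have hlt2 : Submodule.restrictScalars ℂ (m ^ (i + 1))
          < Submodule.span ℂ {x ^ i} ⊔ Submodule.restrictScalars ℂ (m ^ (i + 1)) := by
        refine lt_of_le_of_ne le_sup_right (fun hc => hxnot i hik ?_)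
        have hmem : x ^ i ∈ Submodule.span ℂ {x ^ i}
            ⊔ Submodule.restrictScalars ℂ (m ^ (i + 1)) :=
          Submodule.mem_sup_left (Submodule.mem_span_singleton_self _)
        rw [← hc] at hmem
        exact hmem
      have h3 := Submodule.finrank_lt_finrank_of_lt hlt2
      have e1 := hrank i (by omega)
      have e2 := hrank (i + 1) (by omega)
      omega
    have hdown : ∀ j ≤ k, Submodule.restrictScalars ℂ (m ^ (k - j)) ≤ S := by
      intro j
      induction j with
      | zero =>
        intro _
        rw [Nat.sub_zero, hmk, Submodule.restrictScalars_bot]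
        exact bot_le
      | succ j ih =>
        intro hjk
        have hi : k - (j + 1) < k := by omega
        refine (hstep _ hi).trans (sup_le ?_ ?_)
        · rw [Submodule.span_le, Set.singleton_subset_iff]
          exact Submodule.subset_span ⟨⟨k - (j + 1), hi⟩, rfl⟩
        · rw [show k - (j + 1) + 1 = k - j by omega]
          exact ih (by omega)
    have htop : (⊤ : Submodule ℂ A) ≤ S := by
      have := hdown k le_rfl
      rwa [Nat.sub_self, pow_zero, Ideal.one_eq_top, Submodule.restrictScalars_top] at this
    have hsurj : Function.Surjective (Polynomial.aeval x : ℂ[X] →ₐ[ℂ] A) := by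
      intro a
      have hmem : S ≤ Subalgebra.toSubmodule (Polynomial.aeval x : ℂ[X] →ₐ[ℂ] A).range := by
        rw [hS, Submodule.span_le]
        rintro _ ⟨j, rfl⟩
        exact ⟨X ^ (j : ℕ), by simp⟩
      obtain ⟨p, hp⟩ := hmem (htop Submodule.mem_top)
      exact ⟨p, hp⟩
    have hker : ∀ p ∈ Ideal.span {(X : ℂ[X]) ^ k}, (Polynomial.aeval x) p = 0 := by
      intro p hp
      obtain ⟨q, rfl⟩ := Ideal.mem_span_singleton.mp hp
      rw [map_mul, map_pow, Polynomial.aeval_X, hxk, zero_mul]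
    set ψ : (Polynomial ℂ ⧸ Ideal.span {(X : ℂ[X]) ^ k}) →ₐ[ℂ] A :=
      Ideal.Quotient.liftₐ _ (Polynomial.aeval x) hker with hψ
    have hψsurj : Function.Surjective ψ := by
      intro a
      obtain ⟨p, hp⟩ := hsurj a
      exact ⟨Ideal.Quotient.mk _ p, by
        rw [hψ, Ideal.Quotient.liftₐ_apply]; exact hp⟩
    have hXk0 : ((X : ℂ[X]) ^ k) ≠ 0 := pow_ne_zero _ X_ne_zero
    let pb : PowerBasis ℂ (AdjoinRoot ((X : ℂ[X]) ^ k)) := AdjoinRoot.powerBasis hXk0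
    have hBfin : FiniteDimensional ℂ (Polynomial ℂ ⧸ Ideal.span {(X : ℂ[X]) ^ k}) :=
      Module.Finite.of_basis pb.basis
    have hBrank : Module.finrank ℂ (Polynomial ℂ ⧸ Ideal.span {(X : ℂ[X]) ^ k}) = k := by
      have := pb.finrank
      rwa [show pb.dim = k by simp [pb, AdjoinRoot.powerBasis]] at this
    have hψinj : Function.Injective ψ := by
      have hfr : Module.finrank ℂ (Polynomial ℂ ⧸ Ideal.span {(X : ℂ[X]) ^ k})
          = Module.finrank ℂ A := by rw [hBrank, hdim]
      have hs' : Function.Surjective ψ.toLinearMap := hψsurj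
      exact (LinearMap.injective_iff_surjective_of_finrank_eq_finrank
        (f := ψ.toLinearMap) hfr).mpr hs'
    exact ⟨(AlgEquiv.ofBijective ψ ⟨hψinj, hψsurj⟩).symm⟩
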